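/- For every integer n ≥ 1 and every integer k with 0 ≤ k ≤ n−1, one has ∑_{m=1}^{n} α_m^{(1)}(n) · m^{2k+1} = δ_{0k}, where δ_{0k} is the Kronecker delta (equal to 1 if k = 0 and 0 otherwise). -/

import Mathlib

open Finset

/-- `π_m(n) = ∏_{k=1, k ≠ m}^{n} (1 - m²/k²)`. -/
noncomputable def pim (n m : ℕ) : ℝ :=
  ∏ k ∈ (Finset.Icc 1 n).erase m, (1 - (m : ℝ) ^ 2 / (k : ℝ) ^ 2)

/-- `α_m^{(1)}(n) = 1 / (m · π_m(n))`. -/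
noncomputable def alpha1 (n m : ℕ) : ℝ := 1 / ((m : ℝ) * pim n m)

/-- for every `n ≥ 1` and every `0 ≤ k ≤ n - 1`,
`∑_{m=1}^{n} α_m^{(1)}(n) m^(2k+1) = δ_{0k}`. -/
theorem alpha1_orthogonality (n : ℕ) (hn : 1 ≤ n) (k : ℕ) (hk : k ≤ n - 1) :
    ∑ m ∈ Finset.Icc 1 n, alpha1 n m * (m : ℝ) ^ (2 * k + 1) =
      if k = 0 then 1 else 0 := by
  classical
  set s := Finset.Icc 1 n with hs
  set v : ℕ → ℝ := fun m => (m : ℝ) ^ 2 with hv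
  have hvs : Set.InjOn v s := by
    intro a _ b _ hab
    have : (a : ℝ) = b := by
      simp only [hv] at hab
      nlinarith [Nat.cast_nonneg (α := ℝ) a, Nat.cast_nonneg (α := ℝ) b]
    exact_mod_cast this
  have hcard : #s = n := by simp [hs]
  have hkn : k < n := by omega
  have hdeg : (Polynomial.X ^ k : Polynomial ℝ).degree < #s := by
    rw [hcard, Polynomial.degree_X_pow]
    exact_mod_cast hkn
  have key := Lagrange.eq_interpolate hvs hdeg
  have h0 := congrArg (Polynomial.eval 0) key
  rw [Polynomial.eval_pow, Polynomial.eval_X, Lagrange.interpolate_apply,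
    Polynomial.eval_finset_sum] at h0
  have hzero : (0 : ℝ) ^ k = if k = 0 then 1 else 0 := by
    rcases Nat.eq_zero_or_pos k with h | h
    · simp [h]
    · simp [zero_pow h.ne', h.ne']
  rw [← hzero, h0]
  refine Finset.sum_congr rfl fun m hm => ?_
  have hm1 : 1 ≤ m := (Finset.mem_Icc.mp hm).1
  have hm0 : (m : ℝ) ≠ 0 := by positivity
  -- evaluate the Lagrange basis polynomial at 0
  have hbasis : Polynomial.eval 0 (Lagrange.basis s v m) =
      ∏ j ∈ s.erase m, ((j : ℝ) ^ 2 / ((j : ℝ) ^ 2 - (m : ℝ) ^ 2)) := by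
    rw [Lagrange.basis, Polynomial.eval_prod]
    refine Finset.prod_congr rfl fun j hj => ?_
    have hj1 : 1 ≤ j := (Finset.mem_Icc.mp (Finset.mem_of_mem_erase hj)).1
    have hjm : j ≠ m := Finset.ne_of_mem_erase hj
    have hj0 : (j : ℝ) ≠ 0 := by positivity
    have hne : (j : ℝ) ^ 2 - (m : ℝ) ^ 2 ≠ 0 := by
      have : (j : ℝ) ≠ (m : ℝ) := by exact_mod_cast hjm
      intro h
      have hj' : (0:ℝ) ≤ (j:ℝ) := Nat.cast_nonneg j
      have hm' : (0:ℝ) ≤ (m:ℝ) := Nat.cast_nonneg m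
      exact this (by nlinarith)
    simp only [Lagrange.basisDivisor, Polynomial.eval_mul, Polynomial.eval_C,
      Polynomial.eval_sub, Polynomial.eval_X, hv]
    rw [show ((m:ℝ)^2 - (j:ℝ)^2) = -((j:ℝ)^2 - (m:ℝ)^2) by ring, inv_neg, div_eq_mul_inv]
    ring
  simp only [Polynomial.eval_mul, Polynomial.eval_C, Polynomial.eval_pow,
    Polynomial.eval_X, hv]
  rw [hbasis]
  -- rewrite pim as a product and compare
  have hpim : (pim n m)⁻¹ = ∏ j ∈ s.erase m, ((j : ℝ) ^ 2 / ((j : ℝ) ^ 2 - (m : ℝ) ^ 2)) := by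
    rw [pim, ← hs, ← Finset.prod_inv_distrib]
    refine Finset.prod_congr rfl fun j hj => ?_
    have hj1 : 1 ≤ j := (Finset.mem_Icc.mp (Finset.mem_of_mem_erase hj)).1
    have hjm : j ≠ m := Finset.ne_of_mem_erase hj
    have hj0 : (j : ℝ) ≠ 0 := by positivity
    have hne : (j : ℝ) ^ 2 - (m : ℝ) ^ 2 ≠ 0 := by
      have : (j : ℝ) ≠ (m : ℝ) := by exact_mod_cast hjm
      intro h
      have hj' : (0:ℝ) ≤ (j:ℝ) := Nat.cast_nonneg j
      have hm' : (0:ℝ) ≤ (m:ℝ) := Nat.cast_nonneg m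
      exact this (by nlinarith)
    rw [show (1 - (m:ℝ)^2/(j:ℝ)^2) = ((j:ℝ)^2-(m:ℝ)^2)/(j:ℝ)^2 by field_simp, inv_div]
  rw [alpha1, ← hpim]
  rw [one_div, mul_inv, pow_succ, ← pow_mul]
  field_simp
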